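/- Let p be a prime with p ≡ 3 (mod 4) and set ζ = e^{2πi/p}. Then ∏_{1≤j<k≤(p-1)/2} (ζ^{j²} - ζ^{k²})² = (-p)^{(p-3)/4}. -/

import Mathlib

open Complex

open Finset Polynomial

lemma aux_prod (p : ℕ) [hp : Fact p.Prime] (hp2 : p % 2 = 1) {ζ : ℂ} (hprim : IsPrimitiveRoot ζ p) :
    ∏ c ∈ (Finset.univ : Finset (ZMod p)).erase 0, (ζ ^ c.val - 1) = (p : ℂ) := by
  have hp0 : 0 < p := hp.out.pos
  have hcyc : (p : ℂ) = ∏ μ ∈ primitiveRoots p ℂ, (1 - μ) := by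
    have h := Polynomial.cyclotomic_eq_prod_X_sub_primitiveRoots hprim
    have h2 : Polynomial.eval 1 (Polynomial.cyclotomic p ℂ) = p :=
      Polynomial.eval_one_cyclotomic_prime
    rw [h] at h2
    simpa [Polynomial.eval_prod] using h2.symm
  have hbij : ∏ c ∈ (Finset.univ : Finset (ZMod p)).erase 0, (1 - ζ ^ c.val)
      = ∏ μ ∈ primitiveRoots p ℂ, (1 - μ) := by
    refine Finset.prod_nbij (fun c => ζ ^ c.val) ?_ ?_ ?_ ?_
    · intro c hc
      rw [Finset.mem_erase] at hc
      have hv : c.val ≠ 0 := by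
        simpa [ZMod.val_eq_zero] using hc.1
      have hcop : (c.val).Coprime p := by
        rw [Nat.coprime_comm, hp.out.coprime_iff_not_dvd]
        intro hdvd
        exact hv (Nat.eq_zero_of_dvd_of_lt hdvd c.val_lt)
      rw [mem_primitiveRoots hp0]
      exact hprim.pow_of_coprime c.val hcop
    · intro a _ b _ hab
      have := hprim.pow_inj a.val_lt b.val_lt hab
      exact ZMod.val_injective p this
    · intro μ hμ
      rw [Finset.mem_coe, mem_primitiveRoots hp0] at hμ
      obtain ⟨i, hi, rfl⟩ := hprim.eq_pow_of_pow_eq_one hμ.pow_eq_one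
      have hi0 : i ≠ 0 := by
        rintro rfl
        simp only [pow_zero] at hμ
        have h1 := hμ.unique (IsPrimitiveRoot.one (M := ℂ))
        have := hp.out.one_lt
        omega
      refine ⟨(i : ZMod p), ?_, ?_⟩
      · simp only [Finset.mem_coe, Finset.mem_erase, Finset.mem_univ, and_true]
        intro h0
        rw [ZMod.natCast_eq_zero_iff] at h0
        exact hi0 (Nat.eq_zero_of_dvd_of_lt h0 hi)
      · simp only [ZMod.val_natCast, Nat.mod_eq_of_lt hi]
    · intro c _; rfl
  have hcard : ((Finset.univ : Finset (ZMod p)).erase 0).card = p - 1 := by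
    rw [Finset.card_erase_of_mem (Finset.mem_univ _)]
    simp [ZMod.card]
  calc ∏ c ∈ (Finset.univ : Finset (ZMod p)).erase 0, (ζ ^ c.val - 1)
      = ∏ c ∈ (Finset.univ : Finset (ZMod p)).erase 0, (-1) * (1 - ζ ^ c.val) := by
        apply Finset.prod_congr rfl; intro c _; ring
    _ = (-1 : ℂ) ^ (p - 1) * ∏ c ∈ (Finset.univ : Finset (ZMod p)).erase 0, (1 - ζ ^ c.val) := by
        rw [Finset.prod_mul_distrib, Finset.prod_const, hcard]
    _ = (p : ℂ) := by
        rw [hbij, ← hcyc]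
        have : Even (p - 1) := by
          rw [Nat.even_iff]; omega
        rw [this.neg_one_pow, one_mul]

lemma aux_sq (p : ℕ) [hp : Fact p.Prime] (hp4 : p % 4 = 3) (c : ZMod p) (hc : c ≠ 0) :
    (IsSquare c ∧ ¬ IsSquare (-c)) ∨ (IsSquare (-c) ∧ ¬ IsSquare c) := by
  have hp2 : p ≠ 2 := by rintro rfl; omega
  have hchar : ringChar (ZMod p) ≠ 2 := by
    rw [ZMod.ringChar_zmod_n]; exact hp2
  have hneg1 : quadraticChar (ZMod p) (-1) = -1 := by
    rw [quadraticChar_neg_one hchar, ZMod.card]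
    exact ZMod.χ₄_nat_three_mod_four hp4
  have hmul : quadraticChar (ZMod p) (-c) = - quadraticChar (ZMod p) c := by
    have : (-c) = (-1) * c := by ring
    rw [this, map_mul, hneg1]; ring
  have hc' : (-c : ZMod p) ≠ 0 := neg_ne_zero.mpr hc
  rcases (quadraticChar_dichotomy (F := ZMod p) hc) with h | h
  · left
    refine ⟨(quadraticChar_one_iff_isSquare hc).mp h, ?_⟩
    intro hs
    have := (quadraticChar_one_iff_isSquare hc').mpr hs
    rw [hmul, h] at this; norm_num at this
  · right
    constructor
    · refine (quadraticChar_one_iff_isSquare hc').mp ?_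
      rw [hmul, h]; norm_num
    · intro hs
      have := (quadraticChar_one_iff_isSquare hc).mpr hs
      rw [this] at h; norm_num at h

lemma card_V' (p : ℕ) [hp : Fact p.Prime] (hp2 : p % 2 = 1) (a b : ZMod p)
    (ha : a ≠ 0) (hsa : IsSquare a) (hsb : ¬ IsSquare b) :
    (Finset.univ.filter (fun v : ZMod p => v ≠ 0 ∧ v^2 ≠ a ∧ v^2 ≠ b)).card = p - 3 := by
  obtain ⟨v₀, hv₀⟩ := hsa
  have hv00 : v₀ ≠ 0 := by rintro rfl; exact ha (by rw [hv₀]; ring)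
  have h2 : (2 : ZMod p) ≠ 0 := by
    have h22 : ((2 : ℕ) : ZMod p) ≠ 0 := by
      rw [Ne, ZMod.natCast_eq_zero_iff]
      intro h
      have h3 := Nat.le_of_dvd (by norm_num) h
      have := hp.out.two_le
      omega
    simpa using h22
  have hvneg : v₀ ≠ -v₀ := by
    intro h
    apply hv00
    have : (2 : ZMod p) * v₀ = 0 := by linear_combination h
    exact (mul_eq_zero.mp this).resolve_left h2
  have hset : Finset.univ.filter (fun v : ZMod p => v ≠ 0 ∧ v^2 ≠ a ∧ v^2 ≠ b)
      = Finset.univ \ ({0, v₀, -v₀} : Finset (ZMod p)) := by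
    ext v
    simp only [Finset.mem_filter, Finset.mem_univ, true_and, Finset.mem_sdiff,
      Finset.mem_insert, Finset.mem_singleton]
    constructor
    · rintro ⟨h0, hA, hB⟩
      push_neg
      refine ⟨h0, ?_, ?_⟩
      · rintro rfl; exact hA (by rw [sq]; exact hv₀.symm)
      · rintro rfl; exact hA (by rw [sq]; linear_combination hv₀.symm)
    · intro hmem
      push_neg at hmem
      obtain ⟨h0, h1, h2'⟩ := hmem
      refine ⟨h0, ?_, ?_⟩
      · intro hA
        have hz : (v - v₀) * (v + v₀) = 0 := by
          have : v^2 = v₀ * v₀ := by rw [hA, hv₀]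
          linear_combination this
        rcases mul_eq_zero.mp hz with h | h
        · exact h1 (by linear_combination h)
        · exact h2' (by linear_combination h)
      · intro hB
        exact hsb ⟨v, by rw [← hB, sq]⟩
  rw [hset, Finset.card_sdiff_of_subset (Finset.subset_univ _)]
  have hcard3 : ({0, v₀, -v₀} : Finset (ZMod p)).card = 3 :=
    Finset.card_eq_three.mpr ⟨0, v₀, -v₀, Ne.symm hv00, (neg_ne_zero.mpr hv00).symm, hvneg, rfl⟩
  rw [hcard3, Finset.card_univ, ZMod.card]

lemma card_T (p : ℕ) [hp : Fact p.Prime] (h2 : (2 : ZMod p) ≠ 0) (c : ZMod p) (hc : c ≠ 0) :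
    ((Finset.univ ×ˢ Finset.univ : Finset (ZMod p × ZMod p)).filter
        (fun q => q.1 ≠ 0 ∧ q.2 ≠ 0 ∧ q.1^2 - q.2^2 = c)).card
      = (Finset.univ.filter (fun v : ZMod p => v ≠ 0 ∧ v^2 ≠ c ∧ v^2 ≠ -c)).card := by
  apply Finset.card_nbij' (fun q => q.1 + q.2)
      (fun v => ((v + c * v⁻¹) / 2, (v - c * v⁻¹) / 2))
  · rintro ⟨x, y⟩ hq
    simp only [Finset.mem_coe, Finset.mem_filter, Finset.mem_product, Finset.mem_univ, true_and] at hq ⊢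
    obtain ⟨hx, hy, heq⟩ := hq
    have hxy : x + y ≠ 0 := by
      intro h
      apply hc
      rw [← heq]
      have : y = -x := by linear_combination h
      rw [this]; ring
    refine ⟨hxy, ?_, ?_⟩
    · intro h
      apply hy
      have : (x + y) * (x + y) = (x + y) * (x - y) := by
        rw [← sq]; rw [h, ← heq]; ring
      have h4 := mul_left_cancel₀ hxy this
      have : (2 : ZMod p) * y = 0 := by linear_combination h4
      exact (mul_eq_zero.mp this).resolve_left h2
    · intro h
      apply hx
      have : (x + y) * (x + y) = (x + y) * (y - x) := by
        rw [← sq]; rw [h, ← heq]; ring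
      have h4 := mul_left_cancel₀ hxy this
      have : (2 : ZMod p) * x = 0 := by linear_combination h4
      exact (mul_eq_zero.mp this).resolve_left h2
  · intro v hv
    simp only [Finset.mem_coe, Finset.mem_filter, Finset.mem_univ, true_and, Finset.mem_product] at hv ⊢
    obtain ⟨hv0, hvc, hvc'⟩ := hv
    refine ⟨?_, ?_, ?_⟩
    · intro h
      apply hvc'
      field_simp at h
      linear_combination h
    · intro h
      apply hvc
      field_simp at h
      linear_combination h
    · field_simp
      try ring
  · rintro ⟨x, y⟩ hq
    simp only [Finset.mem_coe, Finset.mem_filter, Finset.mem_product, Finset.mem_univ, true_and] at hq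
    obtain ⟨hx, hy, heq⟩ := hq
    have hxy : x + y ≠ 0 := by
      intro h
      apply hc
      rw [← heq]
      have : y = -x := by linear_combination h
      rw [this]; ring
    have hkey : c * (x + y)⁻¹ = x - y := by
      rw [← heq]
      field_simp
      ring
    simp only [hkey, Prod.mk.injEq]
    constructor
    · field_simp; ring
    · field_simp; ring
  · intro v hv
    have hv0 : v ≠ 0 := by
      simp only [Finset.mem_coe, Finset.mem_filter, Finset.mem_univ, true_and] at hv; exact hv.1
    simp only
    field_simp
    ring

lemma aux_count (p m : ℕ) [hp : Fact p.Prime] (hp4 : p % 4 = 3) (hp7 : 7 ≤ p)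
    (hm : p = 2 * m + 1) (c : ZMod p) (hc : c ≠ 0) :
    ((Finset.Icc 1 m ×ˢ Finset.Icc 1 m).filter
      (fun q : ℕ × ℕ => ((q.1 : ZMod p)^2 - (q.2 : ZMod p)^2 = c))).card = (p - 3) / 4 := by
  have hp2 : p % 2 = 1 := by omega
  have h2 : (2 : ZMod p) ≠ 0 := by
    have h22 : ((2 : ℕ) : ZMod p) ≠ 0 := by
      rw [Ne, ZMod.natCast_eq_zero_iff]
      intro h
      have h3 := Nat.le_of_dvd (by norm_num) h
      omega
    simpa using h22
  set rep : ZMod p → ℕ := fun x => min x.val (p - x.val) with hrep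
  -- facts about rep on nonzero elements
  have hrepB : ∀ x : ZMod p, x ≠ 0 →
      1 ≤ rep x ∧ rep x ≤ m ∧ (((rep x : ℕ) : ZMod p) = x ∨ ((rep x : ℕ) : ZMod p) = -x) := by
    intro x hx
    have hv1 : 1 ≤ x.val := by
      rcases Nat.eq_zero_or_pos x.val with h | h
      · exact absurd ((ZMod.val_eq_zero x).mp h) hx
      · exact h
    have hvlt : x.val < p := x.val_lt
    have hcast : ((x.val : ℕ) : ZMod p) = x := ZMod.natCast_rightInverse x
    have hminle1 : rep x ≤ x.val := by simp [hrep]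
    have hminle2 : rep x ≤ p - x.val := by simp [hrep]
    have hmin1 : 1 ≤ rep x := by simp only [hrep]; exact le_min hv1 (by omega)
    refine ⟨hmin1, by omega, ?_⟩
    rcases le_or_gt x.val (p - x.val) with h | h
    · left
      have : rep x = x.val := by simp [hrep, min_eq_left h]
      rw [this, hcast]
    · right
      have hr : rep x = p - x.val := by simp [hrep, min_eq_right h.le]
      rw [hr, Nat.cast_sub hvlt.le, ZMod.natCast_self, hcast]
      ring
  have hrepA : ∀ j : ℕ, 1 ≤ j → j ≤ m →
      ((j : ZMod p) ≠ 0 ∧ rep ((j : ZMod p)) = j ∧ rep (-(j : ZMod p)) = j) := by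
    intro j h1 hjm
    have hjp : j < p := by omega
    have hval : ((j : ℕ) : ZMod p).val = j := ZMod.val_cast_of_lt hjp
    have hj0 : (j : ZMod p) ≠ 0 := by
      intro h
      rw [h] at hval
      simp [ZMod.val_zero] at hval
      omega
    have hnegval : (-(j : ZMod p)).val = p - j := by
      rw [ZMod.neg_val, if_neg hj0, hval]
    refine ⟨hj0, ?_, ?_⟩
    · simp [hrep, hval]; omega
    · simp [hrep, hnegval]; omega
  set T := ((Finset.univ ×ˢ Finset.univ : Finset (ZMod p × ZMod p)).filter
      (fun q => q.1 ≠ 0 ∧ q.2 ≠ 0 ∧ q.1^2 - q.2^2 = c)) with hT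
  set S' := ((Finset.Icc 1 m ×ˢ Finset.Icc 1 m).filter
      (fun q : ℕ × ℕ => ((q.1 : ZMod p)^2 - (q.2 : ZMod p)^2 = c))) with hS
  have hmaps : ∀ q ∈ T, (rep q.1, rep q.2) ∈ S' := by
    rintro ⟨x, y⟩ hq
    rw [hT, Finset.mem_filter] at hq
    obtain ⟨-, hx, hy, heq⟩ := hq
    obtain ⟨hx1, hxm, hxc⟩ := hrepB x hx
    obtain ⟨hy1, hym, hyc⟩ := hrepB y hy
    rw [hS, Finset.mem_filter]
    refine ⟨by simp [Finset.mem_Icc]; omega, ?_⟩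
    have hxsq : ((rep x : ℕ) : ZMod p)^2 = x^2 := by
      rcases hxc with h | h <;> rw [h] <;> ring
    have hysq : ((rep y : ℕ) : ZMod p)^2 = y^2 := by
      rcases hyc with h | h <;> rw [h] <;> ring
    simpa [hxsq, hysq] using heq
  have hfiber : ∀ s ∈ S', T.filter (fun q => (rep q.1, rep q.2) = s)
      = ({((s.1 : ℕ) : ZMod p), -((s.1 : ℕ) : ZMod p)} : Finset (ZMod p))
          ×ˢ ({((s.2 : ℕ) : ZMod p), -((s.2 : ℕ) : ZMod p)} : Finset (ZMod p)) := by
    rintro ⟨j, k⟩ hs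
    rw [hS, Finset.mem_filter] at hs
    obtain ⟨hmem, heqc⟩ := hs
    simp only [Finset.mem_product, Finset.mem_Icc] at hmem
    obtain ⟨⟨hj1, hjm⟩, hk1, hkm⟩ := hmem
    obtain ⟨hj0, hjrep, hjnrep⟩ := hrepA j hj1 hjm
    obtain ⟨hk0, hkrep, hknrep⟩ := hrepA k hk1 hkm
    ext ⟨x, y⟩
    simp only [Finset.mem_filter, Finset.mem_product, Finset.mem_insert, Finset.mem_singleton,
      hT, Finset.mem_univ, true_and, Prod.mk.injEq]
    constructor
    · rintro ⟨⟨hx, hy, -⟩, hrx, hry⟩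
      obtain ⟨-, -, hxc⟩ := hrepB x hx
      obtain ⟨-, -, hyc⟩ := hrepB y hy
      rw [hrx] at hxc; rw [hry] at hyc
      constructor
      · rcases hxc with h | h
        · left; exact h.symm
        · right; rw [h, neg_neg]
      · rcases hyc with h | h
        · left; exact h.symm
        · right; rw [h, neg_neg]
    · rintro ⟨hxj, hyk⟩
      have hxne : x ≠ 0 := by
        rcases hxj with h | h <;> rw [h]
        · exact hj0
        · simpa using hj0
      have hyne : y ≠ 0 := by
        rcases hyk with h | h <;> rw [h]
        · exact hk0
        · simpa using hk0
      have hxsq : x^2 = ((j : ZMod p))^2 := by rcases hxj with h | h <;> rw [h] <;> ring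
      have hysq : y^2 = ((k : ZMod p))^2 := by rcases hyk with h | h <;> rw [h] <;> ring
      refine ⟨⟨hxne, hyne, by rw [hxsq, hysq]; exact heqc⟩, ?_, ?_⟩
      · rcases hxj with h | h <;> rw [h]
        · exact hjrep
        · exact hjnrep
      · rcases hyk with h | h <;> rw [h]
        · exact hkrep
        · exact hknrep
  have hfcard : ∀ s ∈ S', (T.filter (fun q => (rep q.1, rep q.2) = s)).card = 4 := by
    rintro ⟨j, k⟩ hs
    rw [hfiber _ hs]
    rw [hS, Finset.mem_filter] at hs
    simp only [Finset.mem_product, Finset.mem_Icc] at hs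
    obtain ⟨⟨⟨hj1, hjm⟩, hk1, hkm⟩, -⟩ := hs
    have hpair : ∀ i : ℕ, 1 ≤ i → i ≤ m → ((i : ZMod p)) ≠ -((i : ZMod p)) := by
      intro i h1 him h
      obtain ⟨hi0, -, -⟩ := hrepA i h1 him
      apply hi0
      have : (2 : ZMod p) * (i : ZMod p) = 0 := by linear_combination h
      exact (mul_eq_zero.mp this).resolve_left h2
    rw [Finset.card_product, Finset.card_pair (hpair j hj1 hjm), Finset.card_pair (hpair k hk1 hkm)]
  have hcount : T.card = 4 * S'.card := by
    rw [Finset.card_eq_sum_card_fiberwise hmaps]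
    rw [Finset.sum_congr rfl hfcard, Finset.sum_const, smul_eq_mul, mul_comm]
  have hTcard : T.card = p - 3 := by
    rw [hT, card_T p h2 c hc]
    rcases aux_sq p hp4 c hc with ⟨hs1, hs2⟩ | ⟨hs1, hs2⟩
    · exact card_V' p hp2 c (-c) hc hs1 hs2
    · have : (Finset.univ.filter (fun v : ZMod p => v ≠ 0 ∧ v^2 ≠ c ∧ v^2 ≠ -c))
          = (Finset.univ.filter (fun v : ZMod p => v ≠ 0 ∧ v^2 ≠ -c ∧ v^2 ≠ c)) := by
        apply Finset.filter_congr; intro v _; tauto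
      rw [this]
      exact card_V' p hp2 (-c) c (neg_ne_zero.mpr hc) hs1 hs2
  omega

/-- Let `p ≡ 3 (mod 4)` be a prime and `ζ = e^{2πi/p}`. Then
`∏_{1≤j<k≤(p-1)/2} (ζ^{j²} - ζ^{k²})² = (-p)^{(p-3)/4}`. -/
theorem stmt5 (p : ℕ) [hp : Fact p.Prime] (hp4 : p % 4 = 3)
    (ζ : ℂ) (hζ : ζ = Complex.exp (2 * Real.pi * Complex.I / p)) :
    ∏ k ∈ Finset.Icc 1 ((p - 1) / 2), ∏ j ∈ Finset.Icc 1 (k - 1),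
        (ζ ^ (j ^ 2) - ζ ^ (k ^ 2)) ^ 2
      = (-(p : ℂ)) ^ ((p - 3) / 4) := by
  have hprim : IsPrimitiveRoot ζ p := by
    rw [hζ]; exact Complex.isPrimitiveRoot_exp p hp.out.ne_zero
  by_cases hp3 : p = 3
  · subst hp3
    norm_num [show (3-1)/2 = 1 from rfl, Finset.Icc_self]
  -- now p ≥ 7
  have hp7 : 7 ≤ p := by
    have := hp.out.two_le
    omega
  set m := (p - 1) / 2 with hmdef
  set t := (p - 3) / 4 with htdef
  have hm : p = 2 * m + 1 := by omega
  have hmt : m = 2 * t + 1 := by omega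
  -- the character E
  set E : ZMod p → ℂ := fun a => ζ ^ a.val with hE
  have hζp : ζ ^ p = 1 := hprim.pow_eq_one
  have hmod : ∀ n : ℕ, ζ ^ (n % p) = ζ ^ n := by
    intro n
    conv_rhs => rw [← Nat.div_add_mod n p]
    rw [pow_add, pow_mul, hζp, one_pow, one_mul]
  have hEnat : ∀ n : ℕ, ζ ^ n = E ((n : ZMod p)) := by
    intro n
    rw [hE]
    simp only [ZMod.val_natCast]
    exact (hmod n).symm
  have hE0 : E 0 = 1 := by simp [hE, ZMod.val_zero]
  have hEadd : ∀ a b : ZMod p, E (a + b) = E a * E b := by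
    intro a b
    rw [hE]
    simp only
    rw [ZMod.val_add, hmod, pow_add]
  have hEsum : ∀ (s : Finset (ℕ × ℕ)) (f : ℕ × ℕ → ZMod p),
      ∏ q ∈ s, E (f q) = E (∑ q ∈ s, f q) := by
    intro s f
    induction s using Finset.induction_on with
    | empty => simp [hE0]
    | insert _ _ h ih => rw [Finset.prod_insert h, Finset.sum_insert h, hEadd, ih]
  have hkey : ∀ A B : ZMod p, (E A - E B)^2
      = ((-1) * E (A + B)) * ((E (A - B) - 1) * (E (B - A) - 1)) := by
    intro A B
    have h1 : E (A - B) * E (B - A) = 1 := by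
      rw [← hEadd]; simp [hE0]
    have h2 : E (A - B) * E B = E A := by
      rw [← hEadd]; ring_nf
    have h3 : E (B - A) * E A = E B := by
      rw [← hEadd]; ring_nf
    have h4 : E (A + B) = E A * E B := hEadd A B
    linear_combination (E (A - B) * E (B - A) - E (A - B) - E (B - A) + 1) * h4
      + (E A * E B) * h1 - E A * h2 - E B * h3
  -- pair sets
  set PS := ((Finset.Icc 1 m ×ˢ Finset.Icc 1 m).filter (fun q : ℕ × ℕ => q.1 < q.2)) with hPS
  set OD := ((Finset.Icc 1 m ×ˢ Finset.Icc 1 m).filter (fun q : ℕ × ℕ => q.1 ≠ q.2)) with hOD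
  -- Step A : double product = product over PS
  have hstepA : ∀ (G : ℕ → ℕ → ℂ),
      ∏ k ∈ Finset.Icc 1 m, ∏ j ∈ Finset.Icc 1 (k - 1), G j k = ∏ q ∈ PS, G q.1 q.2 := by
    intro G
    rw [Finset.prod_sigma' (Finset.Icc 1 m) (fun k => Finset.Icc 1 (k - 1))
      (fun k j => G j k)]
    refine Finset.prod_nbij (fun x => (x.2, x.1)) ?_ ?_ ?_ ?_
    · rintro ⟨k, j⟩ hx
      simp only [Finset.mem_sigma, Finset.mem_Icc] at hx
      simp only [hPS, Finset.mem_filter, Finset.mem_product, Finset.mem_Icc]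
      omega
    · rintro ⟨k, j⟩ - ⟨k', j'⟩ - h
      simp only [Prod.mk.injEq] at h
      obtain ⟨h1, h2⟩ := h
      subst h1; subst h2; rfl
    · rintro ⟨j, k⟩ hq
      simp only [Finset.coe_filter, Finset.mem_product, Finset.mem_Icc, Set.mem_setOf_eq,
        hPS, Finset.mem_filter] at hq
      refine ⟨⟨k, j⟩, ?_, rfl⟩
      simp only [Finset.mem_coe, Finset.mem_sigma, Finset.mem_Icc]
      omega
    · intro x _; rfl
  -- swap decomposition of OD
  have hODeq : OD = PS ∪ PS.image (fun q => (q.2, q.1)) := by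
    ext ⟨j, k⟩
    simp only [hOD, hPS, Finset.mem_union, Finset.mem_image, Finset.mem_filter,
      Finset.mem_product, Finset.mem_Icc, Prod.exists, Prod.mk.injEq]
    constructor
    · rintro ⟨⟨hj, hk⟩, hne⟩
      rcases Nat.lt_or_ge j k with h | h
      · left; exact ⟨⟨hj, hk⟩, h⟩
      · right
        exact ⟨k, j, ⟨⟨⟨hk, hj⟩, by omega⟩, rfl, rfl⟩⟩
    · rintro (⟨⟨hj, hk⟩, hlt⟩ | ⟨a, b, ⟨⟨⟨ha, hb⟩, hlt⟩, h1, h2⟩⟩)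
      · exact ⟨⟨hj, hk⟩, by omega⟩
      · subst h1; subst h2; exact ⟨⟨hb, ha⟩, by omega⟩
  have hdisj : Disjoint PS (PS.image (fun q => (q.2, q.1))) := by
    rw [Finset.disjoint_left]
    rintro ⟨j, k⟩ hmem hmem2
    simp only [hPS, Finset.mem_filter] at hmem
    simp only [Finset.mem_image, hPS, Finset.mem_filter] at hmem2
    obtain ⟨⟨a, b⟩, ⟨-, hab⟩, heq⟩ := hmem2
    rw [Prod.ext_iff] at heq
    simp only at heq
    omega
  have hinjswap : Set.InjOn (fun q : ℕ × ℕ => (q.2, q.1)) PS := by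
    rintro ⟨a, b⟩ - ⟨c, d⟩ - h
    simp only [Prod.mk.injEq] at h
    simp [Prod.ext_iff, h.1, h.2]
  have hswap : ∀ (G : ℕ × ℕ → ℂ),
      ∏ q ∈ OD, G q = ∏ q ∈ PS, (G q * G (q.2, q.1)) := by
    intro G
    rw [hODeq, Finset.prod_union hdisj, Finset.prod_image hinjswap, ← Finset.prod_mul_distrib]
  -- cardinalities
  have hcardIcc : (Finset.Icc 1 m).card = m := by
    rw [Nat.card_Icc]; omega
  have hODoff : OD = (Finset.Icc 1 m).offDiag := by
    ext q
    simp only [hOD, Finset.mem_filter, Finset.mem_product, Finset.mem_offDiag]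
    tauto
  have hODcard : OD.card = m * m - m := by
    rw [hODoff, Finset.offDiag_card, hcardIcc]
  have hcard2 : 2 * PS.card = m * m - m := by
    rw [← hODcard, hODeq, Finset.card_union_of_disjoint hdisj,
      Finset.card_image_of_injOn hinjswap]
    omega
  have hPScard : PS.card = m * t := by
    have e1 : m * m = 2 * (m * t) + m := by rw [hmt]; ring
    omega
  -- sum of squares divisibility
  have hsix : ∀ n : ℕ, 6 * ∑ j ∈ Finset.range (n+1), j^2 = n*(n+1)*(2*n+1) := by
    intro n
    induction n with
    | zero => simp
    | succ n ih => rw [Finset.sum_range_succ, Nat.mul_add, ih]; ring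
  have hIccR : Finset.range (m+1) = insert 0 (Finset.Icc 1 m) := by
    ext x; simp; omega
  have hsum_eq : ∑ j ∈ Finset.range (m+1), j^2 = ∑ j ∈ Finset.Icc 1 m, j^2 := by
    rw [hIccR, Finset.sum_insert (by simp)]; simp
  have hSigma : 6 * ∑ j ∈ Finset.Icc 1 m, j^2 = m*(m+1)*p := by
    rw [← hsum_eq, hsix m, hm]
  have hdvdSigma : p ∣ ∑ j ∈ Finset.Icc 1 m, j^2 := by
    have h1 : p ∣ 6 * ∑ j ∈ Finset.Icc 1 m, j^2 := by
      rw [hSigma]; exact dvd_mul_left p (m*(m+1))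
    have hcop : Nat.Coprime p 6 := by
      refine (hp.out.coprime_iff_not_dvd).mpr ?_
      intro h
      have := Nat.le_of_dvd (by norm_num) h
      omega
    exact hcop.dvd_of_dvd_mul_left h1
  -- sum over PS is divisible by p
  have hswapN : ∀ (G : ℕ × ℕ → ℕ), ∑ q ∈ OD, G q = ∑ q ∈ PS, (G q + G (q.2, q.1)) := by
    intro G
    rw [hODeq, Finset.sum_union hdisj, Finset.sum_image hinjswap, ← Finset.sum_add_distrib]
  have hprodsum : ∑ q ∈ Finset.Icc 1 m ×ˢ Finset.Icc 1 m, (q.1^2 + q.2^2)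
      = 2 * (m * ∑ j ∈ Finset.Icc 1 m, j^2) := by
    rw [Finset.sum_product]
    have : ∀ j ∈ Finset.Icc 1 m, ∑ k ∈ Finset.Icc 1 m, (j^2 + k^2)
        = m * j^2 + ∑ k ∈ Finset.Icc 1 m, k^2 := by
      intro j _
      rw [Finset.sum_add_distrib, Finset.sum_const, hcardIcc, smul_eq_mul]
    rw [Finset.sum_congr rfl this, Finset.sum_add_distrib, Finset.sum_const, hcardIcc,
      smul_eq_mul, ← Finset.mul_sum]
    ring
  have hdiag : ∑ q ∈ (Finset.Icc 1 m ×ˢ Finset.Icc 1 m).filter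
      (fun q : ℕ × ℕ => ¬ q.1 ≠ q.2), (q.1^2 + q.2^2) = 2 * ∑ j ∈ Finset.Icc 1 m, j^2 := by
    have hDeq : (Finset.Icc 1 m ×ˢ Finset.Icc 1 m).filter (fun q : ℕ × ℕ => ¬ q.1 ≠ q.2)
        = (Finset.Icc 1 m).image (fun j => (j, j)) := by
      ext ⟨j, k⟩
      simp only [Finset.mem_filter, Finset.mem_product, Finset.mem_Icc, Finset.mem_image,
        Prod.mk.injEq, not_not]
      constructor
      · rintro ⟨⟨hj, -⟩, rfl⟩
        exact ⟨j, hj, rfl, rfl⟩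
      · rintro ⟨a, ha, rfl, rfl⟩
        exact ⟨⟨ha, ha⟩, rfl⟩
    rw [hDeq, Finset.sum_image (by rintro a - b - h; simpa [Prod.ext_iff] using h)]
    rw [Finset.mul_sum]
    apply Finset.sum_congr rfl
    intro j _
    ring
  have hsplit := Finset.sum_filter_add_sum_filter_not (Finset.Icc 1 m ×ˢ Finset.Icc 1 m)
    (fun q : ℕ × ℕ => q.1 ≠ q.2) (fun q : ℕ × ℕ => q.1^2 + q.2^2)
  have h2SPS : 2 * ∑ q ∈ PS, (q.1^2 + q.2^2) = ∑ q ∈ OD, (q.1^2 + q.2^2) := by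
    rw [hswapN (fun q => q.1^2 + q.2^2)]
    rw [Finset.mul_sum]
    apply Finset.sum_congr rfl
    intro q _
    ring
  have hdvdSPS : p ∣ ∑ q ∈ PS, (q.1^2 + q.2^2) := by
    have heq : 2 * ∑ q ∈ PS, (q.1^2 + q.2^2) + 2 * ∑ j ∈ Finset.Icc 1 m, j^2
        = 2 * (m * ∑ j ∈ Finset.Icc 1 m, j^2) := by
      rw [h2SPS, ← hprodsum, ← hsplit, hdiag]
    have h1 : p ∣ 2 * (m * ∑ j ∈ Finset.Icc 1 m, j^2) :=
      Dvd.dvd.mul_left (Dvd.dvd.mul_left hdvdSigma m) 2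
    have h2' : p ∣ 2 * ∑ j ∈ Finset.Icc 1 m, j^2 := Dvd.dvd.mul_left hdvdSigma 2
    have h3 : 2 * ∑ q ∈ PS, (q.1^2 + q.2^2)
        = 2 * (m * ∑ j ∈ Finset.Icc 1 m, j^2) - 2 * ∑ j ∈ Finset.Icc 1 m, j^2 :=
      Nat.eq_sub_of_add_eq heq
    have h4 : p ∣ 2 * ∑ q ∈ PS, (q.1^2 + q.2^2) := h3 ▸ Nat.dvd_sub h1 h2'
    have hcop2 : Nat.Coprime p 2 := by
      refine (hp.out.coprime_iff_not_dvd).mpr ?_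
      intro h
      have := Nat.le_of_dvd (by norm_num) h
      omega
    exact hcop2.dvd_of_dvd_mul_left h4
  have hEzero : E (∑ q ∈ PS, ((q.1 : ZMod p)^2 + (q.2 : ZMod p)^2)) = 1 := by
    have hcast : ∑ q ∈ PS, ((q.1 : ZMod p)^2 + (q.2 : ZMod p)^2)
        = (((∑ q ∈ PS, (q.1^2 + q.2^2) : ℕ)) : ZMod p) := by
      rw [Nat.cast_sum]
      apply Finset.sum_congr rfl
      intro q _
      push_cast
      ring
    have hz : (((∑ q ∈ PS, (q.1^2 + q.2^2) : ℕ)) : ZMod p) = 0 :=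
      (ZMod.natCast_eq_zero_iff _ _).mpr hdvdSPS
    rw [hcast, hz, hE0]
  -- nonvanishing of differences on OD
  have hdne : ∀ q ∈ OD, ((q.1 : ZMod p)^2 - (q.2 : ZMod p)^2) ≠ 0 := by
    rintro ⟨j, k⟩ hq
    simp only [hOD, Finset.mem_filter, Finset.mem_product, Finset.mem_Icc] at hq
    obtain ⟨⟨⟨hj1, hjm⟩, hk1, hkm⟩, hne⟩ := hq
    intro h0
    have hfac : ((j : ZMod p) - k) * ((j : ZMod p) + k) = 0 := by linear_combination h0
    have hsub : (j : ZMod p) - (k : ZMod p) ≠ 0 := by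
      intro h
      have hjk : (j : ZMod p) = k := by linear_combination h
      have hval := congrArg ZMod.val hjk
      rw [ZMod.val_cast_of_lt (by omega), ZMod.val_cast_of_lt (by omega)] at hval
      omega
    have hadd : (j : ZMod p) + (k : ZMod p) ≠ 0 := by
      intro h
      have hjk : (((j + k : ℕ)) : ZMod p) = 0 := by push_cast; linear_combination h
      rw [ZMod.natCast_eq_zero_iff] at hjk
      have := Nat.le_of_dvd (by omega) hjk
      omega
    rcases mul_eq_zero.mp hfac with h | h
    exacts [hsub h, hadd h]
  -- fiberwise evaluation
  have hfib : ∏ q ∈ OD, (E ((q.1 : ZMod p)^2 - (q.2 : ZMod p)^2) - 1)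
      = ∏ c ∈ (Finset.univ : Finset (ZMod p)).erase 0, (E c - 1) ^ t := by
    have hmapsOD : ∀ q ∈ OD, ((q.1 : ZMod p)^2 - (q.2 : ZMod p)^2)
        ∈ (Finset.univ : Finset (ZMod p)).erase 0 := by
      intro q hq
      simp only [Finset.mem_erase, Finset.mem_univ, and_true]
      exact hdne q hq
    rw [← Finset.prod_fiberwise_of_maps_to hmapsOD
      (fun q : ℕ × ℕ => E ((q.1 : ZMod p)^2 - (q.2 : ZMod p)^2) - 1)]
    apply Finset.prod_congr rfl
    intro c hc
    have hc0 : c ≠ 0 := (Finset.mem_erase.mp hc).1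
    have hfe : OD.filter (fun q : ℕ × ℕ => ((q.1 : ZMod p)^2 - (q.2 : ZMod p)^2) = c)
        = (Finset.Icc 1 m ×ˢ Finset.Icc 1 m).filter
            (fun q : ℕ × ℕ => ((q.1 : ZMod p)^2 - (q.2 : ZMod p)^2 = c)) := by
      rw [hOD, Finset.filter_filter]
      apply Finset.filter_congr
      rintro ⟨j, k⟩ hmem
      simp only [ne_eq, and_iff_right_iff_imp]
      intro heq hjk
      apply hc0
      rw [← heq]
      have : (j : ZMod p) = (k : ZMod p) := by rw [hjk]
      rw [this]
      ring
    rw [Finset.prod_congr hfe (fun q hq => by rw [(Finset.mem_filter.mp hq).2]),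
      Finset.prod_const, aux_count p m hp4 hp7 hm c hc0]
  -- final assembly
  calc ∏ k ∈ Finset.Icc 1 m, ∏ j ∈ Finset.Icc 1 (k - 1), (ζ ^ (j ^ 2) - ζ ^ (k ^ 2)) ^ 2
      = ∏ q ∈ PS, (ζ ^ (q.1 ^ 2) - ζ ^ (q.2 ^ 2)) ^ 2 :=
        hstepA (fun j k => (ζ ^ (j ^ 2) - ζ ^ (k ^ 2)) ^ 2)
    _ = ∏ q ∈ PS, (((-1) * E ((q.1 : ZMod p)^2 + (q.2 : ZMod p)^2))
          * ((E ((q.1 : ZMod p)^2 - (q.2 : ZMod p)^2) - 1)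
            * (E ((q.2 : ZMod p)^2 - (q.1 : ZMod p)^2) - 1))) := by
        apply Finset.prod_congr rfl
        rintro ⟨j, k⟩ -
        have e1 : ζ ^ (j ^ 2) = E ((j : ZMod p)^2) := by
          rw [hEnat (j ^ 2)]; push_cast; ring_nf
        have e2 : ζ ^ (k ^ 2) = E ((k : ZMod p)^2) := by
          rw [hEnat (k ^ 2)]; push_cast; ring_nf
        rw [e1, e2, hkey]
    _ = ((∏ q ∈ PS, (-1 : ℂ)) * ∏ q ∈ PS, E ((q.1 : ZMod p)^2 + (q.2 : ZMod p)^2))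
          * ∏ q ∈ PS, ((E ((q.1 : ZMod p)^2 - (q.2 : ZMod p)^2) - 1)
            * (E ((q.2 : ZMod p)^2 - (q.1 : ZMod p)^2) - 1)) := by
        rw [Finset.prod_mul_distrib, Finset.prod_mul_distrib]
    _ = ((-1 : ℂ) ^ t * 1) * ∏ q ∈ OD, (E ((q.1 : ZMod p)^2 - (q.2 : ZMod p)^2) - 1) := by
        congr 1
        · congr 1
          · rw [Finset.prod_const, hPScard, pow_mul,
              (Odd.neg_one_pow ⟨t, by omega⟩ : (-1 : ℂ) ^ m = -1)]
          · rw [hEsum]; exact hEzero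
        · exact (hswap (fun q : ℕ × ℕ => E ((q.1 : ZMod p)^2 - (q.2 : ZMod p)^2) - 1)).symm
    _ = (-1 : ℂ) ^ t * (∏ c ∈ (Finset.univ : Finset (ZMod p)).erase 0, (E c - 1)) ^ t := by
        rw [hfib, mul_one, Finset.prod_pow]
    _ = (-1 : ℂ) ^ t * ((p : ℂ)) ^ t := by
        congr 2
        have : ∀ c : ZMod p, E c - 1 = ζ ^ c.val - 1 := fun c => by rw [hE]
        rw [Finset.prod_congr rfl (fun c _ => this c)]
        exact aux_prod p (by omega) hprim
    _ = (-(p : ℂ)) ^ t := by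
        rw [show (-(p : ℂ)) = (-1) * p by ring, mul_pow]
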